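/- arXiv:2105.06694 — 8 statements merged into one kernel-verified Lean document; each statement's English description precedes it below -/
import Mathlib

section
/- Let θ ∈ ℝ^N, α ∈ ℝ, and let L(θ) be the Kuramoto–Sakaguchi Jacobian with entries l_{ij} = (1/N)cos(θ_i − θ_j + α). Then the set V = { δ ∈ ℝ^N : Σ_{j=1}^N exp(i·θ_j)·δ_j = 0 } is a linear subspace of ℝ^N of dimension at least N − 2, and every δ ∈ V satisfies L(θ)·δ = 0; in particular, if Σ_{j=1}^N exp(i·θ_j) = 0 then 0 is an eigenvalue of L(θ) of geometric multiplicity at least N − 2. -/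
open Matrix

/-- For the Kuramoto–Sakaguchi Jacobian `L(θ)` with entries `(1/N)·cos(θᵢ - θⱼ + α)`, the set
`V = {δ ∈ ℝ^N : Σⱼ exp(i θⱼ) δⱼ = 0}` is a linear subspace of dimension at least `N - 2`, and
every `δ ∈ V` satisfies `L(θ)·δ = 0`; in particular, if `Σⱼ exp(i θⱼ) = 0` then `0` is an
eigenvalue of `L(θ)` of geometric multiplicity at least `N - 2`. -/
theorem kuramoto_sakaguchi_jacobian_kernel (N : ℕ) (θ : Fin N → ℝ) (α : ℝ)
    (L : Matrix (Fin N) (Fin N) ℝ)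
    (hL : ∀ i j, L i j = (1 / N) * Real.cos (θ i - θ j + α)) :
    (∃ V : Submodule ℝ (Fin N → ℝ),
      (V : Set (Fin N → ℝ)) =
        {δ : Fin N → ℝ | ∑ j, Complex.exp (Complex.I * (θ j : ℂ)) * (δ j : ℂ) = 0} ∧
      N - 2 ≤ Module.finrank ℝ V ∧
      ∀ δ ∈ V, L.mulVec δ = 0) ∧
    ((∑ j, Complex.exp (Complex.I * (θ j : ℂ))) = 0 →
      N - 2 ≤ Module.finrank ℝ (LinearMap.ker L.mulVecLin)) := by
  classical
  set f : (Fin N → ℝ) →ₗ[ℝ] ℂ :=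
    { toFun := fun δ => ∑ j, Complex.exp (Complex.I * (θ j : ℂ)) * (δ j : ℂ)
      map_add' := by
        intro x y
        simp [mul_add, Finset.sum_add_distrib]
      map_smul' := by
        intro c x
        simp [Finset.mul_sum, Complex.real_smul]
        ring_nf
        simp [mul_assoc, mul_comm, mul_left_comm] } with hf
  have hker : ∀ δ ∈ LinearMap.ker f, L.mulVec δ = 0 := by
    intro δ hδ
    have h0 : ∑ j, Complex.exp (Complex.I * (θ j : ℂ)) * (δ j : ℂ) = 0 := hδ
    have hre : ∑ j, Real.cos (θ j) * δ j = 0 := by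
      have := congrArg Complex.re h0
      simpa [Complex.re_sum, mul_comm Complex.I, Complex.exp_mul_I,
        Complex.mul_re, Complex.cos_ofReal_re] using this
    have him : ∑ j, Real.sin (θ j) * δ j = 0 := by
      have := congrArg Complex.im h0
      simpa [Complex.im_sum, mul_comm Complex.I, Complex.exp_mul_I,
        Complex.mul_im, Complex.sin_ofReal_re] using this
    funext i
    have : ∑ j, Real.cos (θ i - θ j + α) * δ j = 0 := by
      have : ∀ j, Real.cos (θ i - θ j + α) * δ j =
          Real.cos (θ i + α) * (Real.cos (θ j) * δ j) +
          Real.sin (θ i + α) * (Real.sin (θ j) * δ j) := by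
        intro j
        have : θ i - θ j + α = (θ i + α) - θ j := by ring
        rw [this, Real.cos_sub]
        ring
      rw [Finset.sum_congr rfl fun j _ => this j, Finset.sum_add_distrib,
        ← Finset.mul_sum, ← Finset.mul_sum, hre, him]
      ring
    simp only [Matrix.mulVec, dotProduct, Pi.zero_apply]
    calc ∑ j, L i j * δ j = (1 / N) * ∑ j, Real.cos (θ i - θ j + α) * δ j := by
          rw [Finset.mul_sum]; exact Finset.sum_congr rfl fun j _ => by rw [hL]; ring
      _ = 0 := by rw [this, mul_zero]
  have hrank : (N : ℕ) - 2 ≤ Module.finrank ℝ (LinearMap.ker f) := by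
    have h1 := LinearMap.finrank_range_add_finrank_ker f
    have h2 : Module.finrank ℝ (LinearMap.range f) ≤ 2 := by
      have := Submodule.finrank_le (LinearMap.range f)
      simpa [Complex.finrank_real_complex] using this
    have h3 : Module.finrank ℝ (Fin N → ℝ) = N := by simp
    omega
  refine ⟨⟨LinearMap.ker f, ?_, hrank, hker⟩, ?_⟩
  · ext δ
    simp only [SetLike.mem_coe, LinearMap.mem_ker, Set.mem_setOf_eq, hf,
      LinearMap.coe_mk, AddHom.coe_mk]
  · intro _
    have hle : LinearMap.ker f ≤ LinearMap.ker L.mulVecLin := by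
      intro δ hδ
      simpa [LinearMap.mem_ker] using hker δ hδ
    exact le_trans hrank (Submodule.finrank_mono hle)
end

section
/- Let N ≥ 2, α ∈ ℝ, and θ ∈ ℝ^N with Σ_{j=1}^N exp(i·θ_j) = 0. Then the characteristic polynomial of the Kuramoto–Sakaguchi Jacobian L(θ) over ℂ factors as det(X·I_N − L(θ)) = X^{N−2} · ( X² − cos α · X + (1 − R₂(θ)²)/4 ). -/
open Polynomial Matrix

lemma evalCharpolyAux {n : ℕ} (M : Matrix (Fin n) (Fin n) ℂ) (x : ℂ) :
    M.charpoly.eval x = (x • (1 : Matrix (Fin n) (Fin n) ℂ) - M).det := by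
  rw [Matrix.charpoly, ← coe_evalRingHom, RingHom.map_det]
  congr 1
  ext i j
  by_cases h : i = j
  · subst h; simp [charmatrix_apply_eq, Matrix.one_apply]
  · simp [charmatrix_apply_ne _ _ _ h, Matrix.one_apply, h]

lemma cosCAux (z : ℂ) : Complex.cos z
    = (Complex.exp (Complex.I * z) + Complex.exp (-(Complex.I * z))) / 2 := by
  rw [Complex.cos]; ring_nf


set_option maxHeartbeats 1000000 in
/-- For `N ≥ 2` and a 1-splay phase configuration `θ` (`Σⱼ exp(i θⱼ) = 0`), the characteristic
polynomial over `ℂ` of the Kuramoto–Sakaguchi Jacobian `L(θ)` factors as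
`X^(N-2) · (X² - cos α · X + (1 - R₂(θ)²)/4)`. -/
theorem kuramoto_sakaguchi_charpoly_factorization (N : ℕ) (hN : 2 ≤ N) (θ : Fin N → ℝ) (α : ℝ)
    (hsplay : ∑ j, Complex.exp (Complex.I * (θ j : ℂ)) = 0)
    (L : Matrix (Fin N) (Fin N) ℝ)
    (hL : ∀ i j, L i j = (1 / N) * Real.cos (θ i - θ j + α))
    (R₂ : ℝ)
    (hR₂ : R₂ = ‖((1 / N) * ∑ j, Complex.exp (Complex.I * (2 * (θ j : ℂ))) : ℂ)‖) :
    (L.map Complex.ofReal).charpoly =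
      X ^ (N - 2) *
        (X ^ 2 - C ((Real.cos α : ℂ)) * X + C (((1 - R₂ ^ 2) / 4 : ℝ) : ℂ)) := by
  have hN0 : (N : ℂ) ≠ 0 := Nat.cast_ne_zero.2 (by omega)
  set Z : ℂ := (1 / N) * ∑ j, Complex.exp (Complex.I * (2 * (θ j : ℂ))) with hZ
  set W : ℂ := (starRingEnd ℂ) Z with hW
  set A : Matrix (Fin N) (Fin 2) ℂ := Matrix.of fun i k =>
    if k = 0 then Complex.exp (Complex.I * α) / (2 * N) * Complex.exp (Complex.I * θ i)
    else Complex.exp (-(Complex.I * α)) / (2 * N) * Complex.exp (-(Complex.I * θ i)) with hA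
  set B : Matrix (Fin 2) (Fin N) ℂ := Matrix.of fun k j =>
    if k = 0 then Complex.exp (-(Complex.I * θ j)) else Complex.exp (Complex.I * θ j) with hB
  have hAB : L.map Complex.ofReal = A * B := by
    ext i j
    simp only [Matrix.map_apply, hL, Matrix.mul_apply, Fin.sum_univ_two, hA, hB,
      Matrix.of_apply, if_pos rfl]
    norm_num
    rw [cosCAux]
    rw [show Complex.I * ((θ i : ℂ) - θ j + α) = (Complex.I * α + Complex.I * θ i) + -(Complex.I * θ j) by ring,
      show -(Complex.I * (α:ℂ) + Complex.I * θ i + -(Complex.I * θ j)) = (-(Complex.I * α) + -(Complex.I * θ i)) + Complex.I * θ j by ring,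
      Complex.exp_add, Complex.exp_add, Complex.exp_add, Complex.exp_add]
    field_simp
  have hK00 : (B * A) 0 0 = Complex.exp (Complex.I * α) / 2 := by
    have h : ∀ j, B 0 j * A j 0 = Complex.exp (Complex.I * α) / (2 * N) := by
      intro j
      simp only [hA, hB, Matrix.of_apply]
      norm_num
      rw [mul_comm, mul_assoc, ← Complex.exp_add]
      simp
    rw [Matrix.mul_apply, Finset.sum_congr rfl fun j _ => h j, Finset.sum_const]
    simp only [Finset.card_univ, Fintype.card_fin, nsmul_eq_mul]
    field_simp
  have hK11 : (B * A) 1 1 = Complex.exp (-(Complex.I * α)) / 2 := by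
    have h : ∀ j, B 1 j * A j 1 = Complex.exp (-(Complex.I * α)) / (2 * N) := by
      intro j
      simp only [hA, hB, Matrix.of_apply]
      norm_num
      rw [mul_comm, mul_assoc, ← Complex.exp_add]
      simp
    rw [Matrix.mul_apply, Finset.sum_congr rfl fun j _ => h j, Finset.sum_const]
    simp only [Finset.card_univ, Fintype.card_fin, nsmul_eq_mul]
    field_simp
  have hWsum : W = (1 / N) * ∑ j, Complex.exp (-(Complex.I * (2 * (θ j : ℂ)))) := by
    rw [hW, hZ, _root_.map_mul, map_sum]
    congr 1
    · simp
    · refine Finset.sum_congr rfl fun j _ => ?_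
      rw [← Complex.exp_conj,
        show (Complex.I * (2 * (θ j : ℂ))) = ((2 * θ j : ℝ) : ℂ) * Complex.I by push_cast; ring,
        _root_.map_mul, Complex.conj_ofReal, Complex.conj_I]
      congr 1
      push_cast
      ring
  have hK01 : (B * A) 0 1 = Complex.exp (-(Complex.I * α)) / 2 * W := by
    have h : ∀ j, B 0 j * A j 1
        = Complex.exp (-(Complex.I * α)) / (2 * N) * Complex.exp (-(Complex.I * (2 * (θ j : ℂ)))) := by
      intro j
      simp only [hA, hB, Matrix.of_apply]
      norm_num
      rw [mul_comm, mul_assoc, ← Complex.exp_add]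
      congr 2
      ring
    rw [Matrix.mul_apply, Finset.sum_congr rfl fun j _ => h j, ← Finset.mul_sum, hWsum]
    field_simp
  have hK10 : (B * A) 1 0 = Complex.exp (Complex.I * α) / 2 * Z := by
    have h : ∀ j, B 1 j * A j 0
        = Complex.exp (Complex.I * α) / (2 * N) * Complex.exp (Complex.I * (2 * (θ j : ℂ))) := by
      intro j
      simp only [hA, hB, Matrix.of_apply]
      norm_num
      rw [mul_comm, mul_assoc, ← Complex.exp_add]
      congr 2
      ring
    rw [Matrix.mul_apply, Finset.sum_congr rfl fun j _ => h j, ← Finset.mul_sum, hZ]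
    field_simp
  have hR2sq : ((R₂ : ℂ)) ^ 2 = Z * W := by
    rw [hR₂, ← Complex.ofReal_pow, Complex.sq_norm, ← Complex.mul_conj]
  have hexp1 : Complex.exp (Complex.I * α) * Complex.exp (-(Complex.I * α)) = 1 := by
    rw [← Complex.exp_add]; simp
  apply Polynomial.eq_of_infinite_eval_eq
  apply Set.Infinite.mono (s := {(0 : ℂ)}ᶜ)
  swap
  · exact (Set.finite_singleton 0).infinite_compl
  intro x hx
  have hx0 : x ≠ 0 := hx
  simp only [Set.mem_setOf_eq]
  rw [hAB, evalCharpolyAux]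
  have e1 : x • (1 : Matrix (Fin N) (Fin N) ℂ) - A * B = x • (1 - (x⁻¹ • A) * B) := by
    rw [Matrix.smul_mul, smul_sub, smul_smul, mul_inv_cancel₀ hx0, one_smul]
  rw [e1, Matrix.det_smul, Matrix.det_one_sub_mul_comm, Matrix.mul_smul,
    Matrix.det_fin_two]
  simp only [Matrix.sub_apply, Matrix.smul_apply, Matrix.one_apply_eq,
    Matrix.one_apply_ne (show (0 : Fin 2) ≠ 1 by decide),
    Matrix.one_apply_ne (show (1 : Fin 2) ≠ 0 by decide),
    hK00, hK01, hK10, hK11, smul_eq_mul, Fintype.card_fin]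
  simp only [eval_mul, eval_pow, eval_add, eval_sub, eval_C, eval_X, Complex.ofReal_div,
    Complex.ofReal_sub, Complex.ofReal_one, Complex.ofReal_pow, Complex.ofReal_ofNat,
    Complex.ofReal_cos, cosCAux, hR2sq]
  have hxN : x ^ N = x ^ (N - 2) * x ^ 2 := by
    rw [← pow_add]; congr 1; omega
  rw [hxN, mul_assoc]
  congr 1
  field_simp
  linear_combination (4 - 4*Z*W) * hexp1 + ((Complex.exp (Complex.I * α) * Complex.exp (-(Complex.I * α)) - 1) * 4 * W) * hZ
end

section
/- Let N ≥ 2, α ∈ ℝ, and θ ∈ ℝ^N with Σ_{j=1}^N exp(i·θ_j) = 0 and R₂(θ) < 1, and let L(θ) be the Kuramoto–Sakaguchi Jacobian. Then every nonzero complex eigenvalue of L(θ) has negative real part if and only if cos α < 0. -/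
open Polynomial Matrix

lemma my_eval_charpoly {n : Type*} [DecidableEq n] [Fintype n] (M : Matrix n n ℂ) (z : ℂ) :
    M.charpoly.eval z = (z • (1 : Matrix n n ℂ) - M).det := by
  rw [Matrix.charpoly, ← Polynomial.coe_evalRingHom, RingHom.map_det]
  congr 1
  ext i j
  by_cases h : i = j
  · subst h
    simp [Matrix.charmatrix_apply_eq, Matrix.one_apply]
  · simp [Matrix.charmatrix_apply_ne _ _ _ h, Matrix.one_apply, h]

lemma quad_root_neg (p q : ℝ) (hq : 0 < q) (hp : p < 0) (z : ℂ)
    (h : z ^ 2 - (p : ℂ) * z + (q : ℂ) = 0) : z.re < 0 := by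
  have hre := congrArg Complex.re h
  have him := congrArg Complex.im h
  simp [pow_two, Complex.mul_re, Complex.mul_im] at hre him
  rcases eq_or_ne z.im 0 with hy | hy
  · rw [hy] at hre
    nlinarith [hre, sq_nonneg z.re]
  · have h2 : z.im * (2 * z.re - p) = 0 := by ring_nf; ring_nf at him; linarith
    have := (mul_eq_zero.mp h2).resolve_left hy
    linarith

/-- For `N ≥ 2`, a 1-splay configuration `θ` (`Σⱼ exp(i θⱼ) = 0`) with `R₂(θ) < 1`, every
nonzero complex eigenvalue of the Kuramoto–Sakaguchi Jacobian `L(θ)` has negative real part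
if and only if `cos α < 0`. -/
theorem kuramoto_sakaguchi_splay_stability (N : ℕ) (hN : 2 ≤ N) (θ : Fin N → ℝ) (α : ℝ)
    (hsplay : ∑ j, Complex.exp (Complex.I * (θ j : ℂ)) = 0)
    (L : Matrix (Fin N) (Fin N) ℝ)
    (hL : ∀ i j, L i j = (1 / N) * Real.cos (θ i - θ j + α))
    (R₂ : ℝ)
    (hR₂ : R₂ = ‖((1 / N) * ∑ j, Complex.exp (Complex.I * (2 * (θ j : ℂ))) : ℂ)‖)
    (hR₂lt : R₂ < 1) :
    (∀ z : ℂ, z ≠ 0 → (L.map Complex.ofReal).charpoly.IsRoot z → z.re < 0) ↔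
      Real.cos α < 0 := by
  have hR₂0 : 0 ≤ R₂ := by rw [hR₂]; exact norm_nonneg _
  set u : Fin N → ℂ := fun j => Complex.exp (Complex.I * (θ j : ℂ)) with hu
  set c : ℂ := Complex.exp (Complex.I * (α : ℂ)) with hc
  set n : ℂ := (N : ℂ) with hn
  have hn0 : n ≠ 0 := by simp [hn]; omega
  set S : ℂ := ∑ j, Complex.exp (Complex.I * (2 * (θ j : ℂ))) with hS
  set A : Matrix (Fin N) (Fin 2) ℂ :=
    Matrix.of (fun j k => if k = 0 then u j else (starRingEnd ℂ) (u j)) with hA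
  set B : Matrix (Fin 2) (Fin N) ℂ :=
    Matrix.of (fun k j => if k = 0 then c * (starRingEnd ℂ) (u j) / (2 * n)
      else (starRingEnd ℂ) c * u j / (2 * n)) with hB
  have hconju : ∀ x : ℝ, (starRingEnd ℂ) (Complex.exp (Complex.I * x)) =
      Complex.exp (-(Complex.I * x)) := by
    intro x
    rw [← Complex.exp_conj]
    congr 1
    simp [Complex.conj_I]
  have e1 : ∀ x y z : ℂ, Complex.exp x * (Complex.exp y * Complex.exp z / (2 * n)) =
      Complex.exp (x + y + z) / (2 * n) := by
    intro x y z
    rw [show Complex.exp x * (Complex.exp y * Complex.exp z / (2 * n)) =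
      Complex.exp x * Complex.exp y * Complex.exp z / (2 * n) by ring,
      ← Complex.exp_add, ← Complex.exp_add]
  have hAB : L.map Complex.ofReal = A * B := by
    ext i j
    rw [Matrix.map_apply, hL, Matrix.mul_apply, Fin.sum_univ_two]
    simp only [hA, hB, Matrix.of_apply, if_pos rfl, if_true,
      if_neg (by decide : (1 : Fin 2) ≠ 0)]
    simp only [hu, hc, hconju]
    rw [e1, e1, ← add_div]
    have h2c : Complex.exp (Complex.I * ((θ i - θ j + α : ℝ) : ℂ)) +
        Complex.exp (-(Complex.I * ((θ i - θ j + α : ℝ) : ℂ))) =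
        2 * Complex.cos ((θ i - θ j + α : ℝ) : ℂ) := by
      rw [mul_comm Complex.I, ← neg_mul]
      exact (Complex.two_cos _).symm
    have harg1 : Complex.I * (θ i : ℂ) + Complex.I * (α : ℂ) + -(Complex.I * (θ j : ℂ)) =
        Complex.I * ((θ i - θ j + α : ℝ) : ℂ) := by push_cast; ring
    have harg2 : -(Complex.I * (θ i : ℂ)) + -(Complex.I * (α : ℂ)) + Complex.I * (θ j : ℂ) =
        -(Complex.I * ((θ i - θ j + α : ℝ) : ℂ)) := by push_cast; ring
    rw [harg1, harg2, h2c, ← Complex.ofReal_cos]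
    push_cast
    field_simp
    have hN0c : (N : ℂ) ≠ 0 := by rw [← hn]; exact hn0
    rw [hn]
    field_simp
  -- entries of B * A
  have huu : ∀ j, (starRingEnd ℂ) (u j) * u j = 1 := by
    intro j
    simp only [hu, hconju]
    rw [← Complex.exp_add]
    simp
  have huu2 : ∀ j, u j * u j = Complex.exp (Complex.I * (2 * (θ j : ℂ))) := by
    intro j
    simp only [hu]
    rw [← Complex.exp_add]
    congr 1
    ring
  have hcuu2 : ∀ j, (starRingEnd ℂ) (u j) * (starRingEnd ℂ) (u j) =
      (starRingEnd ℂ) (Complex.exp (Complex.I * (2 * (θ j : ℂ)))) := by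
    intro j
    rw [← _root_.map_mul, huu2]
  have hBA00 : (B * A) 0 0 = c / 2 := by
    rw [Matrix.mul_apply]
    simp only [hB, hA, Matrix.of_apply, if_pos rfl, if_true]
    rw [Finset.sum_congr rfl (fun j _ => show c * (starRingEnd ℂ) (u j) / (2 * n) * u j =
      c / (2 * n) * ((starRingEnd ℂ) (u j) * u j) by ring)]
    simp only [huu, mul_one]
    rw [Finset.sum_const, Finset.card_univ, Fintype.card_fin, nsmul_eq_mul, ← hn]
    field_simp
  have hBA01 : (B * A) 0 1 = c * (starRingEnd ℂ) S / (2 * n) := by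
    rw [Matrix.mul_apply]
    simp only [hB, hA, Matrix.of_apply, if_pos rfl, if_true,
      if_neg (by decide : (1 : Fin 2) ≠ 0)]
    rw [Finset.sum_congr rfl (fun j _ =>
      show c * (starRingEnd ℂ) (u j) / (2 * n) * (starRingEnd ℂ) (u j) =
      c / (2 * n) * ((starRingEnd ℂ) (u j) * (starRingEnd ℂ) (u j)) by ring)]
    simp only [hcuu2]
    rw [← Finset.mul_sum, ← map_sum, ← hS]
    ring
  have hBA10 : (B * A) 1 0 = (starRingEnd ℂ) c * S / (2 * n) := by
    rw [Matrix.mul_apply]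
    simp only [hB, hA, Matrix.of_apply, if_pos rfl, if_true,
      if_neg (by decide : (1 : Fin 2) ≠ 0)]
    rw [Finset.sum_congr rfl (fun j _ =>
      show (starRingEnd ℂ) c * u j / (2 * n) * u j =
      (starRingEnd ℂ) c / (2 * n) * (u j * u j) by ring)]
    simp only [huu2]
    rw [← Finset.mul_sum, ← hS]
    ring
  have hBA11 : (B * A) 1 1 = (starRingEnd ℂ) c / 2 := by
    rw [Matrix.mul_apply]
    simp only [hB, hA, Matrix.of_apply, if_pos rfl, if_true,
      if_neg (by decide : (1 : Fin 2) ≠ 0)]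
    rw [Finset.sum_congr rfl (fun j _ =>
      show (starRingEnd ℂ) c * u j / (2 * n) * (starRingEnd ℂ) (u j) =
      (starRingEnd ℂ) c / (2 * n) * ((starRingEnd ℂ) (u j) * u j) by ring)]
    simp only [huu, mul_one]
    rw [Finset.sum_const, Finset.card_univ, Fintype.card_fin, nsmul_eq_mul, ← hn]
    field_simp
  -- key scalar facts
  have hcc : c * (starRingEnd ℂ) c = 1 := by
    rw [hc, hconju, ← Complex.exp_add]
    simp
  have hcre : c + (starRingEnd ℂ) c = ((2 * Real.cos α : ℝ) : ℂ) := by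
    rw [Complex.add_conj]
    congr 1
    rw [hc, mul_comm Complex.I, Complex.exp_ofReal_mul_I_re]
  have habs : ‖S‖ = N * R₂ := by
    have hNR : (N : ℝ) ≠ 0 := Nat.cast_ne_zero.mpr (by omega)
    rw [hR₂, norm_mul, norm_div, norm_one, hn, Complex.norm_natCast]
    field_simp
  have hSS : S * (starRingEnd ℂ) S = (((N : ℝ) ^ 2 * R₂ ^ 2 : ℝ) : ℂ) := by
    rw [Complex.mul_conj, ← Complex.sq_norm, habs]
    push_cast
    ring
  have hdet2 : ∀ z : ℂ, (z • (1 : Matrix (Fin 2) (Fin 2) ℂ) - B * A).det =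
      z ^ 2 - (Real.cos α : ℂ) * z + (((1 - R₂ ^ 2) / 4 : ℝ) : ℂ) := by
    intro z
    have E00 : (z • (1 : Matrix (Fin 2) (Fin 2) ℂ) - B * A) 0 0 = z - c / 2 := by
      simp [hBA00, Matrix.one_apply]
    have E01 : (z • (1 : Matrix (Fin 2) (Fin 2) ℂ) - B * A) 0 1 =
        -(c * (starRingEnd ℂ) S / (2 * n)) := by
      simp [hBA01, Matrix.one_apply]
    have E10 : (z • (1 : Matrix (Fin 2) (Fin 2) ℂ) - B * A) 1 0 =
        -((starRingEnd ℂ) c * S / (2 * n)) := by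
      simp [hBA10, Matrix.one_apply]
    have E11 : (z • (1 : Matrix (Fin 2) (Fin 2) ℂ) - B * A) 1 1 =
        z - (starRingEnd ℂ) c / 2 := by
      simp [hBA11, Matrix.one_apply]
    rw [Matrix.det_fin_two, E00, E01, E10, E11, hn]
    have hcre' : c + (starRingEnd ℂ) c = 2 * (Real.cos α : ℂ) := by
      rw [hcre]; push_cast; ring
    have hSS' : S * (starRingEnd ℂ) S = (N : ℂ) ^ 2 * (R₂ : ℂ) ^ 2 := by
      rw [hSS]; push_cast; ring
    have hq' : (((1 - R₂ ^ 2) / 4 : ℝ) : ℂ) = (1 - (R₂ : ℂ) ^ 2) / 4 := by push_cast; ring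
    rw [hq']
    have hN0' : (N : ℂ) ≠ 0 := by rw [← hn]; exact hn0
    have hSS4 : S * (starRingEnd ℂ) S / (4 * (N : ℂ) ^ 2) = (R₂ : ℂ) ^ 2 / 4 := by
      rw [hSS']
      field_simp
    linear_combination (-(z / 2)) * hcre' +
      (1 / 4 - S * (starRingEnd ℂ) S / (4 * (N : ℂ) ^ 2)) * hcc - hSS4
  -- root characterization
  have key : ∀ z : ℂ, z ≠ 0 → ((L.map Complex.ofReal).charpoly.IsRoot z ↔
      z ^ 2 - (Real.cos α : ℂ) * z + (((1 - R₂ ^ 2) / 4 : ℝ) : ℂ) = 0) := by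
    intro z hz
    rw [Polynomial.IsRoot, my_eval_charpoly, hAB]
    set A' : Matrix (Fin N) (Fin 2) ℂ := z⁻¹ • A with hA'
    have h1 : z • ((1 : Matrix (Fin N) (Fin N) ℂ) - A' * B) = z • 1 - A * B := by
      rw [smul_sub, hA', Matrix.smul_mul, smul_smul, mul_inv_cancel₀ hz, one_smul]
    have h2 : z • ((1 : Matrix (Fin 2) (Fin 2) ℂ) - B * A') = z • 1 - B * A := by
      rw [smul_sub, hA', Matrix.mul_smul, smul_smul, mul_inv_cancel₀ hz, one_smul]
    have d1 : (z • (1 : Matrix (Fin N) (Fin N) ℂ) - A * B).det =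
        z ^ N * ((1 : Matrix (Fin N) (Fin N) ℂ) - A' * B).det := by
      rw [← h1, Matrix.det_smul, Fintype.card_fin]
    have d2 : (z • (1 : Matrix (Fin 2) (Fin 2) ℂ) - B * A).det =
        z ^ 2 * ((1 : Matrix (Fin 2) (Fin 2) ℂ) - B * A').det := by
      rw [← h2, Matrix.det_smul, Fintype.card_fin]
    have dcomm : ((1 : Matrix (Fin N) (Fin N) ℂ) - A' * B).det =
        ((1 : Matrix (Fin 2) (Fin 2) ℂ) - B * A').det := Matrix.det_one_sub_mul_comm _ _
    have hqd : z ^ 2 * ((1 : Matrix (Fin 2) (Fin 2) ℂ) - B * A').det =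
        z ^ 2 - (Real.cos α : ℂ) * z + (((1 - R₂ ^ 2) / 4 : ℝ) : ℂ) := by
      rw [← d2, hdet2]
    rw [d1, dcomm]
    constructor
    · intro h
      have hd : ((1 : Matrix (Fin 2) (Fin 2) ℂ) - B * A').det = 0 :=
        (mul_eq_zero.mp h).resolve_left (pow_ne_zero _ hz)
      rw [← hqd, hd, mul_zero]
    · intro h
      rw [h] at hqd
      have hd : ((1 : Matrix (Fin 2) (Fin 2) ℂ) - B * A').det = 0 :=
        (mul_eq_zero.mp hqd).resolve_left (pow_ne_zero _ hz)
      rw [hd, mul_zero]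
  -- final equivalence
  have hq : 0 < (1 - R₂ ^ 2) / 4 := by nlinarith
  constructor
  · intro H
    have hdeg : (0 : WithBot ℕ) <
        (X ^ 2 - C ((Real.cos α : ℝ) : ℂ) * X + C (((1 - R₂ ^ 2) / 4 : ℝ) : ℂ)).degree := by
      have : (X ^ 2 - C ((Real.cos α : ℝ) : ℂ) * X +
          C (((1 - R₂ ^ 2) / 4 : ℝ) : ℂ)).degree = 2 := by
        compute_degree!
      rw [this]
      norm_num
    obtain ⟨z₀, hz₀⟩ := Complex.exists_root hdeg
    have hz0 : z₀ ^ 2 - (Real.cos α : ℂ) * z₀ + (((1 - R₂ ^ 2) / 4 : ℝ) : ℂ) = 0 := by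
      simpa [Polynomial.IsRoot] using hz₀
    have hz00 : z₀ ≠ 0 := by
      intro h
      rw [h] at hz0
      have h' : (((1 - R₂ ^ 2) / 4 : ℝ) : ℂ) = 0 := by linear_combination hz0
      have h'' : ((1 - R₂ ^ 2) / 4 : ℝ) = 0 := Complex.ofReal_eq_zero.mp h'
      linarith
    have h1 : z₀.re < 0 := H z₀ hz00 ((key z₀ hz00).mpr hz0)
    have hz1 : ((Real.cos α : ℂ) - z₀) ^ 2 - (Real.cos α : ℂ) * ((Real.cos α : ℂ) - z₀) +
        (((1 - R₂ ^ 2) / 4 : ℝ) : ℂ) = 0 := by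
      linear_combination hz0
    have hz10 : (Real.cos α : ℂ) - z₀ ≠ 0 := by
      intro h
      rw [h] at hz1
      have h' : (((1 - R₂ ^ 2) / 4 : ℝ) : ℂ) = 0 := by linear_combination hz1
      have h'' : ((1 - R₂ ^ 2) / 4 : ℝ) = 0 := Complex.ofReal_eq_zero.mp h'
      linarith
    have h2 : ((Real.cos α : ℂ) - z₀).re < 0 := H _ hz10 ((key _ hz10).mpr hz1)
    have h3 : ((Real.cos α : ℂ) - z₀).re = Real.cos α - z₀.re := by simp [Complex.cos_ofReal_re]
    rw [h3] at h2
    linarith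
  · intro hp z hz hroot
    exact quad_root_neg (Real.cos α) ((1 - R₂ ^ 2) / 4) hq hp z ((key z hz).mp hroot)
end

section
/- Let N ≥ 2, let L be an N×N complex matrix whose characteristic polynomial is divisible by X^{N−2}, set a = Tr(L) and b = Tr(L²), and let γ ∈ ℂ. Consider the 2N×2N block matrix J = [[0, I_N], [L, −γ·I_N]]. Then for every μ ∈ ℂ, det( μ·I_{2N} − J ) = ( μ·(μ+γ) )^{N−2} · ( μ⁴ + 2γμ³ + (γ² − a)μ² − γ·a·μ + (a² − b)/2 ). -/
open Polynomial Matrix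

lemma myEvalCharpoly {n : Type*} [DecidableEq n] [Fintype n]
    (M : Matrix n n ℂ) (x : ℂ) :
    M.charpoly.eval x = (x • (1 : Matrix n n ℂ) - M).det := by
  rw [Matrix.charpoly, ← Polynomial.coe_evalRingHom, RingHom.map_det]
  congr 1
  ext i j
  by_cases h : i = j
  · subst h; simp [charmatrix_apply_eq, Matrix.one_apply]
  · simp [charmatrix_apply_ne _ _ _ h, Matrix.one_apply, h]

lemma myExistsQuad (k : ℕ) (L : Matrix (Fin (k+2)) (Fin (k+2)) ℂ)
    (hdvd : (X : ℂ[X]) ^ k ∣ L.charpoly) :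
    ∃ c₁ c₀ : ℂ, L.charpoly = X ^ k * (X ^ 2 + C c₁ * X + C c₀) := by
  obtain ⟨q, hq⟩ := hdvd
  have hm : L.charpoly.Monic := L.charpoly_monic
  have hq0 : q ≠ 0 := by
    rintro rfl
    rw [mul_zero] at hq
    exact hm.ne_zero hq
  have hdeg : q.natDegree = 2 := by
    have h1 : L.charpoly.natDegree = k + 2 := by
      simpa using L.charpoly_natDegree_eq_dim
    rw [hq, natDegree_mul (pow_ne_zero k X_ne_zero) hq0, natDegree_X_pow] at h1
    omega
  have hqm : q.Monic := by
    have := hm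
    rw [hq] at this
    exact (monic_X_pow k).of_mul_monic_left this
  refine ⟨q.coeff 1, q.coeff 0, ?_⟩
  rw [hq]
  congr 1
  ext n
  match n with
  | 0 => simp
  | 1 => simp
  | 2 =>
    have h2 : q.coeff 2 = 1 := by
      have := hqm.coeff_natDegree; rwa [hdeg] at this
    simp [coeff_X_pow, h2]
  | (n+3) =>
    rw [coeff_eq_zero_of_natDegree_lt (by omega)]
    simp [coeff_X_pow, coeff_C]

/-- For `N ≥ 2`, an `N × N` complex matrix `L` whose characteristic polynomial is divisible by
`X^(N-2)`, `a = Tr L`, `b = Tr L²` and `γ ∈ ℂ`, the inertia block matrix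
`J = [[0, I], [L, -γ I]]` satisfies
`det(μ I₂ₙ - J) = (μ(μ+γ))^(N-2) (μ⁴ + 2γμ³ + (γ² - a)μ² - γ a μ + (a² - b)/2)`. -/
theorem inertia_splay_charpoly_factorization (N : ℕ) (hN : 2 ≤ N)
    (L : Matrix (Fin N) (Fin N) ℂ)
    (hdvd : (X : ℂ[X]) ^ (N - 2) ∣ L.charpoly)
    (a b : ℂ) (ha : a = L.trace) (hb : b = (L * L).trace) (γ : ℂ)
    (J : Matrix (Fin N ⊕ Fin N) (Fin N ⊕ Fin N) ℂ)
    (hJ : J = Matrix.fromBlocks 0 1 L ((-γ) • 1)) :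
    ∀ μ : ℂ,
      (μ • (1 : Matrix (Fin N ⊕ Fin N) (Fin N ⊕ Fin N) ℂ) - J).det =
        (μ * (μ + γ)) ^ (N - 2) *
          (μ ^ 4 + 2 * γ * μ ^ 3 + (γ ^ 2 - a) * μ ^ 2 - γ * a * μ + (a ^ 2 - b) / 2) := by
  obtain ⟨k, rfl⟩ : ∃ k, N = k + 2 := ⟨N - 2, by omega⟩
  simp only [Nat.add_sub_cancel] at hdvd ⊢
  obtain ⟨c₁, c₀, hp⟩ := myExistsQuad k L hdvd
  have hcard : Fintype.card (Fin (k+2)) = k + 2 := by simp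
  -- c₁ = -a
  have hcoeff : L.charpoly.coeff (k+1) = c₁ := by
    rw [hp, show k + 1 = 1 + k from by omega, coeff_X_pow_mul]
    simp [coeff_C, coeff_X]
  have hc₁ : c₁ = -a := by
    have := trace_eq_neg_charpoly_coeff L
    rw [hcard] at this
    simp only [show k + 2 - 1 = k + 1 from rfl, hcoeff] at this
    rw [ha, this]; ring
  -- helper for scalar matrix multiplication
  have hsm : ∀ u v : ℂ, (u • (1 : Matrix (Fin (k+2)) (Fin (k+2)) ℂ)) * (v • 1) = (u*v) • 1 := by
    intro u v
    rw [Matrix.smul_mul, Matrix.mul_smul, smul_smul, Matrix.one_mul]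
  -- charpoly of L*L
  have hLL : (L*L).charpoly = X^k * (X^2 + C (2*c₀ - c₁^2) * X + C (c₀^2)) := by
    apply Polynomial.funext
    intro y
    obtain ⟨x, hx⟩ := IsAlgClosed.exists_pow_nat_eq y (n := 2) two_pos
    have hfac : (x • 1 - L) * (x • 1 + L) = y • (1 : Matrix (Fin (k+2)) (Fin (k+2)) ℂ) - L*L := by
      rw [← hx, sub_mul, mul_add, mul_add]
      simp only [Matrix.smul_mul, Matrix.mul_smul, Matrix.one_mul, Matrix.mul_one, smul_smul,
        pow_two]
      abel
    have hdetneg : (x • 1 + L : Matrix (Fin (k+2)) (Fin (k+2)) ℂ).det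
        = (-1)^(k+2) * ((-x) • (1 : Matrix (Fin (k+2)) (Fin (k+2)) ℂ) - L).det := by
      have h : ((-x) • (1 : Matrix (Fin (k+2)) (Fin (k+2)) ℂ) - L) = -(x • 1 + L) := by
        rw [neg_smul]; abel
      rw [h, Matrix.det_neg, hcard, ← mul_assoc, ← mul_pow]
      norm_num
    rw [myEvalCharpoly, ← hfac, det_mul, hdetneg, ← myEvalCharpoly, ← myEvalCharpoly, hp]
    simp only [eval_mul, eval_pow, eval_add, eval_X, eval_C]
    rw [← hx]
    have hx1 : ((-1:ℂ))^k * (-1)^k = 1 := by rw [← mul_pow]; norm_num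
    have e1 : ((-x):ℂ)^k = (-1)^k * x^k := by rw [neg_pow]
    have e3 : ((-1:ℂ))^(k+2) = (-1)^k := by rw [pow_add]; norm_num
    rw [e1, e3]
    linear_combination ((x^k)^2 * ((x^2 + c₁*x + c₀) * (x^2 - c₁*x + c₀))) * hx1
  -- b = c₁^2 - 2c₀
  have hcoeff2 : (L*L).charpoly.coeff (k+1) = 2*c₀ - c₁^2 := by
    rw [hLL, show k + 1 = 1 + k from by omega, coeff_X_pow_mul]
    simp only [coeff_add, coeff_X_pow, coeff_C_mul, coeff_X_one, coeff_C]
    norm_num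
  have hc₀ : c₀ = (a^2 - b)/2 := by
    have := trace_eq_neg_charpoly_coeff (L*L)
    rw [hcard] at this
    simp only [show k + 2 - 1 = k + 1 from rfl, hcoeff2] at this
    rw [hb, this, hc₁]; ring
  -- charpoly of J
  have hJp : J.charpoly = (L.charpoly).comp (X * (X + C γ)) := by
    apply eq_of_infinite_eval_eq
    apply Set.Infinite.mono (s := {x : ℂ | x + γ ≠ 0})
    · intro μ hμ
      simp only [Set.mem_setOf_eq] at hμ ⊢
      rw [myEvalCharpoly, eval_comp, eval_mul, eval_add, eval_X, eval_C, myEvalCharpoly]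
      have hblocks : μ • (1 : Matrix (Fin (k+2) ⊕ Fin (k+2)) (Fin (k+2) ⊕ Fin (k+2)) ℂ) - J
          = fromBlocks (μ • 1) (-1) (-L) ((μ + γ) • 1) := by
        rw [hJ, ← fromBlocks_one, fromBlocks_smul]
        ext (i|i) (j|j) <;>
          simp [Matrix.sub_apply, Matrix.one_apply, Matrix.smul_apply, mul_ite] <;>
          split <;> ring
      rw [hblocks]
      haveI : Invertible ((μ + γ) • (1 : Matrix (Fin (k+2)) (Fin (k+2)) ℂ)) :=
        ⟨(μ + γ)⁻¹ • 1, by rw [hsm, inv_mul_cancel₀ hμ, one_smul],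
          by rw [hsm, mul_inv_cancel₀ hμ, one_smul]⟩
      rw [Matrix.det_fromBlocks₂₂]
      have hinv : ⅟((μ + γ) • (1 : Matrix (Fin (k+2)) (Fin (k+2)) ℂ)) = (μ + γ)⁻¹ • 1 :=
        invOf_eq_right_inv (by rw [hsm, mul_inv_cancel₀ hμ, one_smul])
      rw [hinv]
      have h1 : (-1 : Matrix (Fin (k+2)) (Fin (k+2)) ℂ) * ((μ + γ)⁻¹ • 1) * (-L)
          = (μ + γ)⁻¹ • L := by
        simp [Matrix.neg_mul, Matrix.mul_neg, Matrix.smul_mul]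
      rw [h1]
      have h2 : (μ * (μ + γ)) • (1 : Matrix (Fin (k+2)) (Fin (k+2)) ℂ) - L
          = (μ + γ) • (μ • 1 - (μ + γ)⁻¹ • L) := by
        rw [smul_sub, smul_smul, smul_smul, mul_inv_cancel₀ hμ, one_smul, mul_comm]
      rw [h2, Matrix.det_smul, Matrix.det_smul, Matrix.det_one, hcard, mul_one]
    · have : ({x : ℂ | x + γ ≠ 0}) = {-γ}ᶜ := by
        ext x; simp [Set.mem_compl_iff, sub_eq_zero, add_eq_zero_iff_eq_neg]
      rw [this]
      exact (Set.finite_singleton (-γ)).infinite_compl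
  intro μ
  rw [← myEvalCharpoly, hJp, eval_comp, eval_mul, eval_add, eval_X, eval_C, hp]
  simp only [eval_mul, eval_pow, eval_add, eval_X, eval_C]
  rw [hc₁, hc₀]
  ring
end

section
/- Let L be an N×N complex matrix and γ ∈ ℂ. Then μ ∈ ℂ is an eigenvalue of the 2N×2N block matrix [[0, I_N], [L, −γ·I_N]] if and only if μ² + γ·μ is an eigenvalue of L. -/
open Polynomial Matrix

lemma eval_charpoly_aux {n : Type*} [Fintype n] [DecidableEq n]
    (M : Matrix n n ℂ) (μ : ℂ) :
    M.charpoly.eval μ = (μ • (1 : Matrix n n ℂ) - M).det := by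
  rw [Matrix.charpoly, _root_.eval_det, matPolyEquiv_charmatrix]
  congr 1
  rw [eval_sub, eval_X, eval_C]
  congr 1
  ext i j
  simp [Matrix.scalar_apply, Matrix.smul_apply, Matrix.one_apply, Matrix.diagonal_apply]

/-- For an `N × N` complex matrix `L` and `γ ∈ ℂ`, `μ` is an eigenvalue of the block matrix
`[[0, I], [L, -γ I]]` if and only if `μ² + γ μ` is an eigenvalue of `L`. -/
theorem inertia_block_eigenvalue_iff (N : ℕ) (L : Matrix (Fin N) (Fin N) ℂ) (γ : ℂ)
    (J : Matrix (Fin N ⊕ Fin N) (Fin N ⊕ Fin N) ℂ)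
    (hJ : J = Matrix.fromBlocks 0 1 L ((-γ) • 1)) :
    ∀ μ : ℂ, J.charpoly.IsRoot μ ↔ L.charpoly.IsRoot (μ ^ 2 + γ * μ) := by
  subst hJ
  have key : (Matrix.fromBlocks 0 1 L ((-γ) • 1)).charpoly
      = L.charpoly.comp (X ^ 2 + C γ * X) := by
    apply Polynomial.eq_of_infinite_eval_eq
    refine Set.Infinite.mono ?_ ((Set.finite_singleton (-γ)).infinite_compl)
    intro μ hμ
    have hc : μ + γ ≠ 0 := by
      intro h
      exact hμ (by simp [show μ = -γ by linear_combination h])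
    simp only [Set.mem_setOf_eq, eval_comp, eval_add, eval_pow, eval_mul, eval_C, eval_X]
    rw [eval_charpoly_aux, eval_charpoly_aux]
    have h1 : μ • (1 : Matrix (Fin N ⊕ Fin N) (Fin N ⊕ Fin N) ℂ)
        - Matrix.fromBlocks 0 1 L ((-γ) • 1)
        = Matrix.fromBlocks (μ • 1) (-1) (-L) ((μ + γ) • 1) := by
      rw [← Matrix.fromBlocks_one, Matrix.fromBlocks_smul, sub_eq_add_neg,
        Matrix.fromBlocks_neg, Matrix.fromBlocks_add]
      any_goals simp
      all_goals module
    rw [h1]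
    set c := μ + γ with hcdef
    have h2 : Matrix.fromBlocks (1 : Matrix (Fin N) (Fin N) ℂ)
          (c⁻¹ • (1 : Matrix (Fin N) (Fin N) ℂ)) (0 : Matrix (Fin N) (Fin N) ℂ)
          (1 : Matrix (Fin N) (Fin N) ℂ)
        * Matrix.fromBlocks (μ • 1) (-1) (-L) (c • 1)
        = Matrix.fromBlocks (μ • 1 - c⁻¹ • L) 0 (-L) (c • 1) := by
      rw [Matrix.fromBlocks_multiply]
      simp [Matrix.fromBlocks_inj, Matrix.smul_mul, smul_smul, inv_mul_cancel₀ hc, mul_inv_cancel₀ hc,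
        sub_eq_add_neg]
    have hdet : (Matrix.fromBlocks (μ • 1) (-1) (-L) (c • 1)).det
        = (Matrix.fromBlocks (μ • 1 - c⁻¹ • L) 0 (-L) (c • 1)).det := by
      have := congrArg Matrix.det h2
      rwa [Matrix.det_mul, Matrix.det_fromBlocks_zero₂₁, Matrix.det_one, one_mul, one_mul]
        at this
    rw [hdet, Matrix.det_fromBlocks_zero₁₂]
    have hm : c • (μ • (1 : Matrix (Fin N) (Fin N) ℂ) - c⁻¹ • L)
        = (μ ^ 2 + γ * μ) • 1 - L := by
      rw [smul_sub, smul_smul, smul_smul, mul_inv_cancel₀ hc, one_smul]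
      rw [hcdef]
      ring_nf
    rw [← hm]
    simp [Matrix.det_smul, mul_comm]
  intro μ
  rw [key, Polynomial.IsRoot.def, Polynomial.IsRoot.def, eval_comp]
  simp only [eval_add, eval_pow, eval_mul, eval_C, eval_X]
end

section
/- Let K < N, let L be an N×N complex matrix, B an N×K complex matrix, C a K×N complex matrix, and ε ∈ ℂ. Then the polynomial det( (X + ε)·(X·I_N − L) − B·C ) ∈ ℂ[X] is divisible by (X + ε)^{N−K}; that is, −ε is a root of this determinant polynomial of multiplicity at least N − K. -/
open Polynomial Matrix

/-- If the rows of `D` indexed by `T` vanish, then `p ^ T.card` divides `det (p • A - D)`. -/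
lemma det_smul_sub_dvd {R : Type*} [CommRing R] {n : ℕ} (p : R)
    (A D : Matrix (Fin n) (Fin n) R) (T : Finset (Fin n))
    (hD : ∀ i ∈ T, ∀ j, D i j = 0) :
    p ^ T.card ∣ (p • A - D).det := by
  classical
  set A' : Matrix (Fin n) (Fin n) R :=
    Matrix.of (fun i j => if i ∈ T then A i j else p * A i j - D i j) with hA'
  have h : (p • A - D) = Matrix.of (fun i j => (if i ∈ T then p else 1) * A' i j) := by
    ext i j
    by_cases hi : i ∈ T
    · simp [hA', hi, hD i hi j, Matrix.sub_apply, Matrix.smul_apply, smul_eq_mul]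
    · simp [hA', hi, Matrix.sub_apply, Matrix.smul_apply, smul_eq_mul]
  rw [h, Matrix.det_mul_column]
  refine Dvd.dvd.mul_right ?_ _
  have hfilter : Finset.univ.filter (· ∈ T) = T := by ext j; simp
  rw [Finset.prod_ite, Finset.prod_const, Finset.prod_const_one, mul_one, hfilter]

/-- There is an invertible matrix `P` whose columns with index `≥ K` lie in the kernel of
`Cm`. -/
lemma exists_good_P (N K : ℕ) (hK : K < N) (Cm : Matrix (Fin K) (Fin N) ℂ) :
    ∃ P : Matrix (Fin N) (Fin N) ℂ, IsUnit P.det ∧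
      ∀ j : Fin N, K ≤ (j : ℕ) → Cm.mulVec (fun i => P i j) = 0 := by
  classical
  set W : Submodule ℂ (Fin N → ℂ) := LinearMap.ker Cm.mulVecLin with hW
  obtain ⟨W', hcompl⟩ := Submodule.exists_isCompl W
  have hrank : Module.finrank ℂ (LinearMap.range Cm.mulVecLin)
      + Module.finrank ℂ W = N := by
    have := LinearMap.finrank_range_add_finrank_ker Cm.mulVecLin
    simpa [hW, Module.finrank_fintype_fun_eq_card] using this
  have hrle : Module.finrank ℂ (LinearMap.range Cm.mulVecLin) ≤ K := by
    calc Module.finrank ℂ (LinearMap.range Cm.mulVecLin)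
        ≤ Module.finrank ℂ (Fin K → ℂ) := Submodule.finrank_le _
      _ = K := by simp [Module.finrank_fintype_fun_eq_card]
  have hsum : Module.finrank ℂ W' + Module.finrank ℂ W = N := by
    have := Submodule.finrank_add_eq_of_isCompl hcompl.symm
    simpa [Module.finrank_fintype_fun_eq_card] using this
  have haK : Module.finrank ℂ W' ≤ K := by omega
  set a := Module.finrank ℂ W'
  set d := Module.finrank ℂ W
  let bigB : Module.Basis (Fin a ⊕ Fin d) ℂ (Fin N → ℂ) :=
    ((Module.finBasis ℂ W').prod (Module.finBasis ℂ W)).map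
      (Submodule.prodEquivOfIsCompl W' W hcompl.symm)
  let e : (Fin a ⊕ Fin d) ≃ Fin N := finSumFinEquiv.trans (finCongr hsum)
  let c : Module.Basis (Fin N) ℂ (Fin N → ℂ) := bigB.reindex e
  refine ⟨Matrix.of (fun i j => c j i), ?_, ?_⟩
  · have hPm : Matrix.of (fun i j : Fin N => c j i)
        = (Pi.basisFun ℂ (Fin N)).toMatrix ⇑c := by
      ext i j
      simp [Module.Basis.toMatrix]
    rw [hPm]
    exact Matrix.isUnit_det_of_right_inverse
      (Module.Basis.toMatrix_mul_toMatrix_flip (Pi.basisFun ℂ (Fin N)) c)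
  · intro j hj
    have hcol : (fun i => (Matrix.of (fun i j : Fin N => c j i)) i j) = c j := rfl
    rw [hcol]
    have hmem : (c j : Fin N → ℂ) ∈ W := by
      have hcj : c j = bigB (e.symm j) := by
        simp [c, Module.Basis.reindex_apply]
      rcases h : e.symm j with i | i
      · exfalso
        have hji : e (Sum.inl i) = j := by rw [← h, Equiv.apply_symm_apply]
        have : (j : ℕ) = (i : ℕ) := by
          rw [← hji]
          simp [e]
        have := i.isLt
        omega
      · rw [hcj, h]
        have : bigB (Sum.inr i)
            = ((0 : W') : Fin N → ℂ) + ((Module.finBasis ℂ W i : W) : Fin N → ℂ) := by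
          simp [bigB, Module.Basis.map_apply, Module.Basis.prod_apply]
        rw [this]
        simpa using (Module.finBasis ℂ W i).2
    have := (LinearMap.mem_ker.mp hmem)
    simpa [Matrix.mulVecLin_apply] using this

/-- For `K < N`, complex matrices `L : N × N`, `B : N × K`, `C : K × N` and `ε ∈ ℂ`, the
polynomial `det((X + ε)(X Iₙ - L) - B C) ∈ ℂ[X]` is divisible by `(X + ε)^(N-K)`, i.e. `-ε`
is a root of multiplicity at least `N - K`. -/
theorem adaptive_schur_root_multiplicity (N K : ℕ) (hK : K < N)
    (L : Matrix (Fin N) (Fin N) ℂ) (B : Matrix (Fin N) (Fin K) ℂ)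
    (Cm : Matrix (Fin K) (Fin N) ℂ) (ε : ℂ) :
    ((X : ℂ[X]) + C ε) ^ (N - K) ∣
      Matrix.det
        (((X : ℂ[X]) + C ε) •
            ((X : ℂ[X]) • (1 : Matrix (Fin N) (Fin N) ℂ[X]) - L.map (fun x => C x))
          - (B * Cm).map (fun x => C x)) := by
  classical
  obtain ⟨P, hPu, hPcol⟩ := exists_good_P N K hK Cm
  set p : ℂ[X] := X + C ε with hp
  set A : Matrix (Fin N) (Fin N) ℂ[X] :=
    (X : ℂ[X]) • (1 : Matrix (Fin N) (Fin N) ℂ[X]) - L.map (fun x => C x) with hA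
  set D : Matrix (Fin N) (Fin N) ℂ[X] := (B * Cm).map (fun x => C x) with hD
  set Pc : Matrix (Fin N) (Fin N) ℂ[X] := P.map (fun x : ℂ => (C x : ℂ[X])) with hPc
  have hPcu : IsUnit Pc.det := by
    have : Pc.det = C P.det := ((C : ℂ →+* ℂ[X]).map_det P).symm
    rw [this]
    exact hPu.map (C : ℂ →+* ℂ[X])
  set T : Finset (Fin N) := Finset.Ici (⟨K, hK⟩ : Fin N) with hT
  have hTcard : T.card = N - K := Fin.card_Ici _
  have hTmem : ∀ j : Fin N, j ∈ T ↔ K ≤ (j : ℕ) := by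
    intro j; simp [hT, Fin.le_def]
  -- the columns of D * Pc indexed by T vanish
  have hDPc : ∀ j ∈ T, ∀ i, (D * Pc) i j = 0 := by
    intro j hj i
    have hDPc' : D * Pc = ((B * Cm) * P).map (fun x : ℂ => (C x : ℂ[X])) := by
      rw [hD, hPc]
      exact (Matrix.map_mul (f := (C : ℂ →+* ℂ[X]))).symm
    rw [hDPc', Matrix.map_apply]
    have hcol : ((B * Cm) * P) i j = 0 := by
      rw [Matrix.mul_assoc]
      have hCmP : ∀ k, (Cm * P) k j = 0 := by
        intro k
        have := congrFun (hPcol j ((hTmem j).mp hj)) k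
        simpa [Matrix.mulVec, dotProduct, Matrix.mul_apply] using this
      simp [Matrix.mul_apply, hCmP]
    rw [hcol]
    simp
  have key : p ^ (N - K) ∣ (p • A - D).det * Pc.det := by
    rw [← Matrix.det_mul]
    have hexp : (p • A - D) * Pc = p • (A * Pc) - D * Pc := by
      rw [Matrix.sub_mul, Matrix.smul_mul]
    rw [hexp, ← Matrix.det_transpose]
    have htr : (p • (A * Pc) - D * Pc)ᵀ = p • (A * Pc)ᵀ - (D * Pc)ᵀ := by
      rw [Matrix.transpose_sub, Matrix.transpose_smul]
    rw [htr, ← hTcard]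
    exact det_smul_sub_dvd p ((A * Pc)ᵀ) ((D * Pc)ᵀ) T
      (fun i hi j => hDPc i hi j)
  exact (hPcu.dvd_mul_right).mp key
end

section
/- Let K ≥ N, let L be an N×N complex matrix, B an N×K complex matrix, C a K×N complex matrix, and ε ∈ ℂ, and let J be the (N+K)×(N+K) block matrix [[L, B], [C, −ε·I_K]]. Then for every μ ∈ ℂ, det( μ·I_{N+K} − J ) = (μ + ε)^{K−N} · det( (μ + ε)·(μ·I_N − L) − B·C ). In particular, J has the eigenvalue −ε with algebraic multiplicity at least K − N, and all remaining eigenvalues are the roots of det( (μ+ε)·(μ·I_N − L) − B·C ) = 0. -/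
open Polynomial Matrix

private lemma aux_eval (N K : ℕ) (hK : N ≤ K) (L : Matrix (Fin N) (Fin N) ℂ)
    (B : Matrix (Fin N) (Fin K) ℂ) (Cm : Matrix (Fin K) (Fin N) ℂ) (ε μ : ℂ)
    (hμ : μ + ε ≠ 0) :
    (μ • (1 : Matrix (Fin N ⊕ Fin K) (Fin N ⊕ Fin K) ℂ) -
        Matrix.fromBlocks L B Cm ((-ε) • 1)).det =
      (μ + ε) ^ (K - N) *
        ((μ + ε) • (μ • (1 : Matrix (Fin N) (Fin N) ℂ) - L) - B * Cm).det := by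
  have h1 : μ • (1 : Matrix (Fin N ⊕ Fin K) (Fin N ⊕ Fin K) ℂ) -
      Matrix.fromBlocks L B Cm ((-ε) • 1) =
      Matrix.fromBlocks (μ • 1 - L) (-B) (-Cm) ((μ + ε) • 1) := by
    ext (i | i) (j | j) <;>
      simp [Matrix.one_apply, Matrix.smul_apply, Matrix.sub_apply] <;>
      split <;> ring
  haveI : Invertible ((μ + ε) • (1 : Matrix (Fin K) (Fin K) ℂ)) :=
    ⟨(μ + ε)⁻¹ • 1, by
      rw [smul_mul_smul_comm, one_mul, inv_mul_cancel₀ hμ, one_smul], by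
      rw [smul_mul_smul_comm, one_mul, mul_inv_cancel₀ hμ, one_smul]⟩
  have hinv : ⅟((μ + ε) • (1 : Matrix (Fin K) (Fin K) ℂ)) = (μ + ε)⁻¹ • 1 :=
    invOf_eq_right_inv (by
      rw [smul_mul_smul_comm, one_mul, mul_inv_cancel₀ hμ, one_smul])
  rw [h1, Matrix.det_fromBlocks₂₂, hinv]
  have h2 : (-B) * ((μ + ε)⁻¹ • (1 : Matrix (Fin K) (Fin K) ℂ)) * (-Cm)
      = (μ + ε)⁻¹ • (B * Cm) := by
    rw [Matrix.mul_smul, Matrix.mul_one, Matrix.smul_mul, Matrix.neg_mul,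
      Matrix.mul_neg, neg_neg]
  have h3 : (μ + ε) • ((μ • (1 : Matrix (Fin N) (Fin N) ℂ) - L) - (μ + ε)⁻¹ • (B * Cm))
      = (μ + ε) • (μ • (1 : Matrix (Fin N) (Fin N) ℂ) - L) - B * Cm := by
    rw [smul_sub, smul_smul, mul_inv_cancel₀ hμ, one_smul]
  rw [h2, ← h3, Matrix.det_smul, Matrix.det_smul, Matrix.det_one, mul_one,
    Fintype.card_fin, Fintype.card_fin]
  rw [← mul_assoc, ← pow_add, Nat.sub_add_cancel hK]

/-- For `K ≥ N`, complex matrices `L : N × N`, `B : N × K`, `C : K × N`, `ε ∈ ℂ`, and the block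
matrix `J = [[L, B], [C, -ε Iₖ]]`, one has
`det(μ I - J) = (μ + ε)^(K-N) · det((μ + ε)(μ Iₙ - L) - B C)` for every `μ ∈ ℂ`; in particular
`J` has eigenvalue `-ε` with algebraic multiplicity at least `K - N`. -/
theorem adaptive_block_charpoly_reduction (N K : ℕ) (hK : N ≤ K)
    (L : Matrix (Fin N) (Fin N) ℂ) (B : Matrix (Fin N) (Fin K) ℂ)
    (Cm : Matrix (Fin K) (Fin N) ℂ) (ε : ℂ)
    (J : Matrix (Fin N ⊕ Fin K) (Fin N ⊕ Fin K) ℂ)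
    (hJ : J = Matrix.fromBlocks L B Cm ((-ε) • 1)) :
    (∀ μ : ℂ,
      (μ • (1 : Matrix (Fin N ⊕ Fin K) (Fin N ⊕ Fin K) ℂ) - J).det =
        (μ + ε) ^ (K - N) *
          ((μ + ε) • (μ • (1 : Matrix (Fin N) (Fin N) ℂ) - L) - B * Cm).det) ∧
    ((X : ℂ[X]) + C ε) ^ (K - N) ∣ J.charpoly := by
  subst hJ
  set J := Matrix.fromBlocks L B Cm ((-ε) • (1 : Matrix (Fin K) (Fin K) ℂ)) with hJdef
  -- The Schur-complement polynomial
  set P : ℂ[X] := (((X : ℂ[X]) + C ε) •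
      ((X : ℂ[X]) • (1 : Matrix (Fin N) (Fin N) ℂ[X]) - L.map C) - (B * Cm).map C).det with hP
  have hPeval : ∀ μ : ℂ, P.eval μ =
      ((μ + ε) • (μ • (1 : Matrix (Fin N) (Fin N) ℂ) - L) - B * Cm).det := by
    intro μ
    have := (RingHom.map_det (evalRingHom μ)
      (((X : ℂ[X]) + C ε) •
        ((X : ℂ[X]) • (1 : Matrix (Fin N) (Fin N) ℂ[X]) - L.map C) - (B * Cm).map C)).symm
    rw [hP]
    rw [show (evalRingHom μ) ((((X : ℂ[X]) + C ε) •
        ((X : ℂ[X]) • (1 : Matrix (Fin N) (Fin N) ℂ[X]) - L.map C) - (B * Cm).map C).det)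
        = P.eval μ from rfl] at this
    rw [← this]
    congr 1
    ext i j
    by_cases h : i = j <;>
      simp [h, Matrix.map_apply, Matrix.one_apply, Matrix.smul_apply, Matrix.sub_apply,
        Matrix.mul_apply, Polynomial.eval_finset_sum]
  have hcp : ∀ μ : ℂ, (Matrix.charpoly J).eval μ =
      (μ • (1 : Matrix (Fin N ⊕ Fin K) (Fin N ⊕ Fin K) ℂ) - J).det := by
    intro μ
    have := (RingHom.map_det (evalRingHom μ) (charmatrix J)).symm
    rw [Matrix.charpoly]
    rw [show (evalRingHom μ) ((charmatrix J).det) = (charmatrix J).det.eval μ from rfl] at this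
    rw [← this]
    congr 1
    ext i j
    by_cases h : i = j
    · subst h
      simp [Matrix.charmatrix_apply_eq, Matrix.one_apply, Matrix.smul_apply, Matrix.sub_apply]
    · simp [Matrix.charmatrix_apply_ne _ _ _ h, Matrix.one_apply_ne h,
        Matrix.smul_apply, Matrix.sub_apply]
  have hfactor : Matrix.charpoly J = ((X : ℂ[X]) + C ε) ^ (K - N) * P := by
    have hzero : Matrix.charpoly J - ((X : ℂ[X]) + C ε) ^ (K - N) * P = 0 := by
      apply Polynomial.eq_zero_of_infinite_isRoot
      apply Set.Infinite.mono (s := {(-ε)}ᶜ)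
      · intro μ hμ
        have hμ' : μ + ε ≠ 0 := by
          intro h
          exact hμ (by simpa using eq_neg_of_add_eq_zero_left h)
        simp only [Set.mem_setOf_eq, IsRoot.def, eval_sub, eval_mul, eval_pow, eval_add,
          eval_X, eval_C, hPeval, hcp, aux_eval N K hK L B Cm ε μ hμ', sub_self]
        exact sub_eq_zero.mpr (aux_eval N K hK L B Cm ε μ hμ')
      · exact (Set.finite_singleton (-ε)).infinite_compl
    exact sub_eq_zero.mp hzero
  constructor
  · intro μ
    have h := congrArg (Polynomial.eval μ) hfactor
    rw [hcp μ] at h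
    rw [h]
    simp [hPeval μ]
  · exact ⟨P, hfactor⟩
end

section
/- Let N ≥ 2 and K ≥ N, let L be an N×N complex matrix, B an N×K complex matrix, C a K×N complex matrix, and ε ∈ ℂ. Suppose there exists a linear subspace V of ℂ^N with dim V ≥ N − 2 such that L·v = 0 and C·v = 0 for all v ∈ V. Set L̃ = B·C, t = Tr(L), p = Tr(L²), s = Tr(L̃), u = Tr(L̃²), q = Tr(L·L̃), and let J be the (N+K)×(N+K) block matrix [[L, B], [C, −ε·I_K]]. Then for every μ ∈ ℂ, det( μ·I_{N+K} − J ) = (μ + ε)^{K−N} · ( μ·(μ + ε) )^{N−2} · Q(μ), where Q(μ) = μ⁴ + (2ε − t)·μ³ + ( ε² − 2ε·t + (t² − p)/2 − s )·μ² + ( t·s − q + ε·(t² − p − s) − ε²·t )·μ + ( s² − u + 2ε·(t·s − q) + ε²·(t² − p) )/2. -/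
open Matrix

lemma sum_dite_fin_le {α : Type*} [AddCommMonoid α] {r : ℕ} (hr : r ≤ 2) (f : Fin r → α) :
    ∑ k : Fin 2, (if h : (k : ℕ) < r then f ⟨k, h⟩ else 0) = ∑ j : Fin r, f j := by
  set F : ℕ → α := fun k => if h : k < r then f ⟨k, h⟩ else 0 with hF
  have h1 : ∑ k : Fin 2, (if h : (k : ℕ) < r then f ⟨k, h⟩ else 0)
      = ∑ k ∈ Finset.range 2, F k := Fin.sum_univ_eq_sum_range F 2
  have h2 : ∑ k ∈ Finset.range r, F k = ∑ k ∈ Finset.range 2, F k := by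
    refine Finset.sum_subset (Finset.range_subset_range.2 hr) ?_
    intro x _ hx
    simp only [Finset.mem_range, not_lt] at hx
    simp [hF, Nat.not_lt.mpr hx]
  have h3 : ∑ k ∈ Finset.range r, F k = ∑ j : Fin r, f j := by
    rw [← Fin.sum_univ_eq_sum_range F r]
    exact Finset.sum_congr rfl fun j _ => by simp [hF, j.isLt]
  rw [h1, ← h2, h3]

lemma exists_factorization {N : ℕ} (M : Matrix (Fin N) (Fin N) ℂ)
    (h : Module.finrank ℂ (LinearMap.range M.mulVecLin) ≤ 2) :
    ∃ (P : Matrix (Fin N) (Fin 2) ℂ) (Q : Matrix (Fin 2) (Fin N) ℂ), M = P * Q := by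
  set R := LinearMap.range M.mulVecLin with hRdef
  set r := Module.finrank ℂ R with hrdef
  let b : Module.Basis (Fin r) ℂ R := Module.finBasis ℂ R
  have hmem : ∀ j : Fin N, (fun i => M i j) ∈ R := fun j =>
    ⟨Pi.single j 1, by ext i; simp [Matrix.mulVecLin_apply, Matrix.mulVec_single]⟩
  set P : Matrix (Fin N) (Fin 2) ℂ :=
    Matrix.of fun i k => if h' : (k : ℕ) < r then ((b ⟨(k : ℕ), h'⟩ : Fin N → ℂ) i) else 0 with hP
  set Q : Matrix (Fin 2) (Fin N) ℂ :=
    Matrix.of fun k j => if h' : (k : ℕ) < r then b.repr ⟨_, hmem j⟩ ⟨(k : ℕ), h'⟩ else 0 with hQ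
  refine ⟨P, Q, ?_⟩
  ext i j
  symm
  rw [Matrix.mul_apply]
  have step : ∀ k : Fin 2, P i k * Q k j
      = if h' : (k : ℕ) < r then
          (b.repr ⟨fun i => M i j, hmem j⟩ ⟨(k : ℕ), h'⟩ • (b ⟨(k : ℕ), h'⟩ : Fin N → ℂ)) i
        else 0 := by
    intro k
    by_cases h' : (k : ℕ) < r <;> simp [hP, hQ, h', mul_comm]
  rw [Finset.sum_congr rfl fun k _ => step k,
    sum_dite_fin_le h (fun k0 => (b.repr ⟨fun i => M i j, hmem j⟩ k0 • (b k0 : Fin N → ℂ)) i)]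
  have key : ((⟨fun i => M i j, hmem j⟩ : R) : Fin N → ℂ)
      = ((∑ k : Fin r, b.repr ⟨fun i => M i j, hmem j⟩ k • b k : R) : Fin N → ℂ) := by
    rw [b.sum_repr]
  have := congrFun key i
  simp only [Submodule.coe_sum, Submodule.coe_smul] at this
  rw [Finset.sum_apply] at this
  exact this.symm

lemma det2 (Ω : Matrix (Fin 2) (Fin 2) ℂ) (x : ℂ) :
    (x • (1:Matrix (Fin 2) (Fin 2) ℂ) - Ω).det
      = x^2 - Ω.trace * x + (Ω.trace^2 - (Ω*Ω).trace)/2 := by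
  simp [Matrix.det_fin_two, Matrix.trace_fin_two, Matrix.mul_apply, Fin.sum_univ_two,
    Matrix.smul_apply, Matrix.one_apply, Matrix.sub_apply]
  ring

lemma wa {N : ℕ} (hN : 2 ≤ N) (P : Matrix (Fin N) (Fin 2) ℂ) (Q : Matrix (Fin 2) (Fin N) ℂ)
    (x : ℂ) (hx : x ≠ 0) :
    (x • (1 : Matrix (Fin N) (Fin N) ℂ) - P * Q).det
      = x ^ (N - 2) * (x • (1 : Matrix (Fin 2) (Fin 2) ℂ) - Q * P).det := by
  have key : ∀ (m : ℕ) (PQ : Matrix (Fin m) (Fin m) ℂ),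
      (x • (1 : Matrix (Fin m) (Fin m) ℂ) - PQ)
        = x • (1 + (-x⁻¹) • PQ) := by
    intro m PQ
    rw [smul_add, smul_smul, mul_neg, mul_inv_cancel₀ hx]
    simp [sub_eq_add_neg]
  rw [key N (P * Q), key 2 (Q * P), Matrix.det_smul, Matrix.det_smul]
  have h2 : (-x⁻¹) • (P * Q) = ((-x⁻¹) • P) * Q := (Matrix.smul_mul _ _ _).symm
  have h3 : (-x⁻¹) • (Q * P) = Q * ((-x⁻¹) • P) := (Matrix.mul_smul _ _ _).symm
  rw [h2, h3, Matrix.det_one_add_mul_comm]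
  simp only [Fintype.card_fin]
  rw [show x ^ N = x ^ (N - 2) * x ^ 2 by rw [← pow_add]; congr 1; omega]
  ring

lemma det_rank_le_two {N : ℕ} (hN : 2 ≤ N) (M : Matrix (Fin N) (Fin N) ℂ)
    (h : Module.finrank ℂ (LinearMap.range M.mulVecLin) ≤ 2) (x : ℂ) (hx : x ≠ 0) :
    (x • (1 : Matrix (Fin N) (Fin N) ℂ) - M).det
      = x ^ (N - 2) * (x^2 - M.trace * x + (M.trace^2 - (M*M).trace)/2) := by
  obtain ⟨P, Q, rfl⟩ := exists_factorization M h
  rw [wa hN P Q x hx, det2]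
  have ht : (Q * P).trace = (P * Q).trace := Matrix.trace_mul_comm Q P
  have ht2 : ((Q * P) * (Q * P)).trace = ((P * Q) * (P * Q)).trace := by
    rw [Matrix.mul_assoc, Matrix.trace_mul_comm Q (P * (Q * P))]
    rw [← Matrix.mul_assoc, ← Matrix.mul_assoc]
  rw [ht, ht2]

/-- Let `N ≥ 2`, `K ≥ N`, with complex matrices `L : N × N`, `B : N × K`, `C : K × N`, `ε ∈ ℂ`,
and a subspace `V` of dimension at least `N - 2` with `L v = 0` and `C v = 0` for `v ∈ V`.
Setting `L̃ = B C`, `t = Tr L`, `p = Tr L²`, `s = Tr L̃`, `u = Tr L̃²`, `q = Tr(L L̃)` and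
`J = [[L, B], [C, -ε Iₖ]]`, one has for every `μ ∈ ℂ`:
`det(μ I - J) = (μ+ε)^(K-N) (μ(μ+ε))^(N-2) Q(μ)` with the explicit quartic `Q`. -/
theorem adaptive_splay_full_charpoly_factorization (N K : ℕ) (hN : 2 ≤ N) (hK : N ≤ K)
    (L : Matrix (Fin N) (Fin N) ℂ) (B : Matrix (Fin N) (Fin K) ℂ)
    (Cm : Matrix (Fin K) (Fin N) ℂ) (ε : ℂ)
    (V : Submodule ℂ (Fin N → ℂ)) (hVdim : N - 2 ≤ Module.finrank ℂ V)
    (hV : ∀ v ∈ V, L.mulVec v = 0 ∧ Cm.mulVec v = 0)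
    (Lt : Matrix (Fin N) (Fin N) ℂ) (hLt : Lt = B * Cm)
    (t p s u q : ℂ)
    (ht : t = L.trace) (hp : p = (L * L).trace) (hs : s = Lt.trace)
    (hu : u = (Lt * Lt).trace) (hq : q = (L * Lt).trace)
    (J : Matrix (Fin N ⊕ Fin K) (Fin N ⊕ Fin K) ℂ)
    (hJ : J = Matrix.fromBlocks L B Cm ((-ε) • 1)) :
    ∀ μ : ℂ,
      (μ • (1 : Matrix (Fin N ⊕ Fin K) (Fin N ⊕ Fin K) ℂ) - J).det =
        (μ + ε) ^ (K - N) * (μ * (μ + ε)) ^ (N - 2) *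
          (μ ^ 4 + (2 * ε - t) * μ ^ 3
            + (ε ^ 2 - 2 * ε * t + (t ^ 2 - p) / 2 - s) * μ ^ 2
            + (t * s - q + ε * (t ^ 2 - p - s) - ε ^ 2 * t) * μ
            + (s ^ 2 - u + 2 * ε * (t * s - q) + ε ^ 2 * (t ^ 2 - p)) / 2) := by
  have key : ∀ μ : ℂ, μ ≠ 0 → μ + ε ≠ 0 →
      (μ • (1 : Matrix (Fin N ⊕ Fin K) (Fin N ⊕ Fin K) ℂ) - J).det =
        (μ + ε) ^ (K - N) * (μ * (μ + ε)) ^ (N - 2) *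
          (μ ^ 4 + (2 * ε - t) * μ ^ 3
            + (ε ^ 2 - 2 * ε * t + (t ^ 2 - p) / 2 - s) * μ ^ 2
            + (t * s - q + ε * (t ^ 2 - p - s) - ε ^ 2 * t) * μ
            + (s ^ 2 - u + 2 * ε * (t * s - q) + ε ^ 2 * (t ^ 2 - p)) / 2) := by
    intro μ hμ hμε
    set c : ℂ := (μ + ε)⁻¹ with hc
    set M : Matrix (Fin N) (Fin N) ℂ := L + c • Lt with hM
    -- block structure
    have hsplit : μ • (1 : Matrix (Fin N ⊕ Fin K) (Fin N ⊕ Fin K) ℂ) - J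
        = Matrix.fromBlocks (μ • 1 - L) (-B) (-Cm) ((μ + ε) • 1) := by
      rw [hJ]
      ext (i | i) (j | j) <;>
        simp [Matrix.one_apply, Matrix.smul_apply, Matrix.sub_apply, add_smul]
    -- invertibility of the lower-right block
    haveI : Invertible ((μ + ε) • (1 : Matrix (Fin K) (Fin K) ℂ)) :=
      ⟨(μ + ε)⁻¹ • (1 : Matrix (Fin K) (Fin K) ℂ),
        by rw [smul_mul_smul_comm, inv_mul_cancel₀ hμε, one_mul, one_smul],
        by rw [smul_mul_smul_comm, mul_inv_cancel₀ hμε, one_mul, one_smul]⟩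
    have hinv : ⅟((μ + ε) • (1 : Matrix (Fin K) (Fin K) ℂ))
        = (μ + ε)⁻¹ • (1 : Matrix (Fin K) (Fin K) ℂ) :=
      invOf_eq_right_inv
        (by rw [smul_mul_smul_comm, mul_inv_cancel₀ hμε, one_mul, one_smul])
    rw [hsplit, Matrix.det_fromBlocks₂₂, hinv]
    -- simplify the Schur complement
    have hschur : (μ • 1 - L) - (-B) * ((μ + ε)⁻¹ • (1 : Matrix (Fin K) (Fin K) ℂ)) * (-Cm)
        = μ • (1 : Matrix (Fin N) (Fin N) ℂ) - M := by
      rw [Matrix.mul_smul, Matrix.mul_one, Matrix.smul_mul, Matrix.neg_mul, Matrix.mul_neg,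
        neg_neg, hM, hLt, ← hc, sub_sub]
    rw [hschur]
    -- determinant of the lower-right block
    have hdetD : ((μ + ε) • (1 : Matrix (Fin K) (Fin K) ℂ)).det = (μ + ε) ^ K := by
      rw [Matrix.det_smul, Matrix.det_one, mul_one, Fintype.card_fin]
    -- rank bound on M
    have hker : V ≤ LinearMap.ker M.mulVecLin := by
      intro v hv
      obtain ⟨h1, h2⟩ := hV v hv
      have h3 : Lt.mulVec v = 0 := by
        rw [hLt, ← Matrix.mulVec_mulVec, h2, Matrix.mulVec_zero]
      simp [LinearMap.mem_ker, Matrix.mulVecLin_apply, hM, Matrix.add_mulVec,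
        Matrix.smul_mulVec, h1, h3]
    have hrank : Module.finrank ℂ (LinearMap.range M.mulVecLin) ≤ 2 := by
      have h1 := LinearMap.finrank_range_add_finrank_ker M.mulVecLin
      have h2 : Module.finrank ℂ (Fin N → ℂ) = N := Module.finrank_fin_fun ℂ
      have h3 : N - 2 ≤ Module.finrank ℂ (LinearMap.ker M.mulVecLin) :=
        le_trans hVdim (Submodule.finrank_mono hker)
      omega
    rw [det_rank_le_two hN M hrank μ hμ]
    -- traces of M
    have hTr : M.trace = t + c * s := by
      rw [hM, Matrix.trace_add, Matrix.trace_smul, ht, hs, smul_eq_mul]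
    have hMM : M * M = L * L + c • (L * Lt) + c • (Lt * L) + (c * c) • (Lt * Lt) := by
      rw [hM]
      rw [Matrix.add_mul, Matrix.mul_add, Matrix.mul_add, Matrix.smul_mul, Matrix.mul_smul,
        Matrix.smul_mul, Matrix.mul_smul, smul_smul]
      abel
    have hTr2 : (M * M).trace = p + 2 * c * q + c * c * u := by
      rw [hMM]
      rw [Matrix.trace_add, Matrix.trace_add, Matrix.trace_add, Matrix.trace_smul,
        Matrix.trace_smul, Matrix.trace_smul, Matrix.trace_mul_comm Lt L]
      rw [← hp, ← hq, ← hu]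
      simp only [smul_eq_mul]
      ring
    rw [hTr, hTr2, hdetD]
    -- final algebraic identity
    have hpowsplit : (μ + ε) ^ K = (μ + ε) ^ (K - N) * ((μ + ε) ^ (N - 2) * (μ + ε) ^ 2) := by
      rw [← pow_add, ← pow_add]; congr 1; omega
    have hmulpow : (μ * (μ + ε)) ^ (N - 2) = μ ^ (N - 2) * (μ + ε) ^ (N - 2) := mul_pow _ _ _
    have hquad : (μ + ε) ^ 2 *
        (μ ^ 2 - (t + c * s) * μ + ((t + c * s) ^ 2 - (p + 2 * c * q + c * c * u)) / 2)
        = (μ ^ 4 + (2 * ε - t) * μ ^ 3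
            + (ε ^ 2 - 2 * ε * t + (t ^ 2 - p) / 2 - s) * μ ^ 2
            + (t * s - q + ε * (t ^ 2 - p - s) - ε ^ 2 * t) * μ
            + (s ^ 2 - u + 2 * ε * (t * s - q) + ε ^ 2 * (t ^ 2 - p)) / 2) := by
      have hc' : c * (μ + ε) = 1 := inv_mul_cancel₀ hμε
      linear_combination (((t*s - q - s*μ) * (μ+ε)) + (s^2 - u) * (c*(μ+ε) + 1)/2) * hc'
    rw [hpowsplit, hmulpow, ← hquad]
    ring
  -- extend to all μ by continuity
  have hcont1 : Continuous fun μ : ℂ =>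
      (μ • (1 : Matrix (Fin N ⊕ Fin K) (Fin N ⊕ Fin K) ℂ) - J).det :=
    ((continuous_id.smul continuous_const).sub continuous_const).matrix_det
  have hcont2 : Continuous fun μ : ℂ =>
      (μ + ε) ^ (K - N) * (μ * (μ + ε)) ^ (N - 2) *
          (μ ^ 4 + (2 * ε - t) * μ ^ 3
            + (ε ^ 2 - 2 * ε * t + (t ^ 2 - p) / 2 - s) * μ ^ 2
            + (t * s - q + ε * (t ^ 2 - p - s) - ε ^ 2 * t) * μ
            + (s ^ 2 - u + 2 * ε * (t * s - q) + ε ^ 2 * (t ^ 2 - p)) / 2) := by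
    fun_prop
  have hdense : Dense (({0, -ε} : Set ℂ)ᶜ) :=
    (Set.toFinite ({0, -ε} : Set ℂ)).countable.dense_compl ℂ
  have heqon : Set.EqOn _ _ (({0, -ε} : Set ℂ)ᶜ) := fun μ hμ => by
    simp only [Set.mem_compl_iff, Set.mem_insert_iff, Set.mem_singleton_iff, not_or] at hμ
    exact key μ hμ.1 (fun h => hμ.2 (by linear_combination h))
  have := Continuous.ext_on hdense hcont1 hcont2 heqon
  exact fun μ => congrFun this μ
end
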